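/- Let Δ⁰ = 0 and, for k = 1,…,K, let r^k and h^k be bounded measurable functions with esssup_α |r^k| ≤ G and esssup_α |h^k − (Δ^{k−1} + r^k)| ≤ (1−γ)·esssup_α |Δ^{k−1} + r^k|, and define Δ^k = Clip_{(1−γ)G/γ}(Δ^{k−1} + r^k − h^k). Then for every k = 1,…,K: (i) esssup_α |Δ^k| ≤ (1−γ)G/γ and, α-almost everywhere, Δ^k = Δ^{k−1} + r^k − h^k (i.e. the clipping in the residual update is inactive α-almost everywhere); and (ii) esssup_α |h^k| ≤ (2−γ)G/γ, so Clip_{(2−γ)G/γ}(h^k) = h^k α-almost everywhere. -/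
import Mathlib


open MeasureTheory

/-- The clipping operator `Clip_R(f)(x) = max(min(f(x), R), −R)`. -/
def Clip {X : Type*} (R : ℝ) (f : X → ℝ) : X → ℝ :=
  fun x => max (min (f x) R) (-R)

lemma abs_clip_le {X : Type*} {R : ℝ} (hR : 0 ≤ R) (f : X → ℝ) (x : X) :
    |Clip R f x| ≤ R := by
  unfold Clip
  rw [abs_le]
  exact ⟨le_max_right _ _, max_le (min_le_right _ _) (by linarith)⟩

lemma clip_eq_self {X : Type*} {R : ℝ} {f : X → ℝ} {x : X} (h : |f x| ≤ R) :
    Clip R f x = f x := by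
  obtain ⟨h1, h2⟩ := abs_le.mp h
  unfold Clip
  rw [min_eq_left h2, max_eq_left h1]

lemma essSup_le_of_ae_le_real {X : Type*} [MeasurableSpace X] (α : Measure X)
    [IsProbabilityMeasure α] {f : X → ℝ} {c : ℝ}
    (h : ∀ᵐ x ∂α, |f x| ≤ c) : essSup (fun x => |f x|) α ≤ c := by
  rw [essSup_eq_sInf]
  apply csInf_le
  · refine ⟨0, fun a ha => ?_⟩
    by_contra hlt
    push_neg at hlt
    simp only [Set.mem_setOf_eq] at ha
    have hsub : (Set.univ : Set X) ⊆ {x | a < |f x|} := fun x _ =>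
      lt_of_lt_of_le hlt (abs_nonneg _)
    have h1 : α Set.univ ≤ α {x | a < |f x|} := measure_mono hsub
    rw [ha, measure_univ] at h1
    simp at h1
  · simp only [Set.mem_setOf_eq]
    have h2 := ae_iff.mp h
    simp only [not_le] at h2
    exact h2

/-- Boundedness of the FFGB.C residuals and weak learner outputs: the clipping
in the residual update is inactive `α`-a.e., `esssup_α |Δ^k| ≤ (1−γ)G/γ`,
`esssup_α |h^k| ≤ (2−γ)G/γ`, and `Clip_{(2−γ)G/γ}(h^k) = h^k` `α`-a.e. -/
theorem ffgbc_residual_boundedness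
    {X : Type*} [MeasurableSpace X] (α : Measure X) [IsProbabilityMeasure α]
    (G γ : ℝ) (hG : 0 ≤ G) (hγ0 : 0 < γ) (hγ1 : γ ≤ 1) (K : ℕ)
    (Δ r h : ℕ → X → ℝ)
    (hΔ0 : Δ 0 = fun _ => 0)
    -- all functions are bounded and measurable
    (hrm : ∀ k ∈ Finset.Icc 1 K, Measurable (r k) ∧ ∃ M : ℝ, ∀ x, |r k x| ≤ M)
    (hhm : ∀ k ∈ Finset.Icc 1 K, Measurable (h k) ∧ ∃ M : ℝ, ∀ x, |h k x| ≤ M)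
    -- the subgradients are `G`-bounded
    (hrG : ∀ k ∈ Finset.Icc 1 K, essSup (fun x => |r k x|) α ≤ G)
    -- weak learning oracle property
    (horacle : ∀ k ∈ Finset.Icc 1 K,
      essSup (fun x => |h k x - (Δ (k - 1) x + r k x)|) α
        ≤ (1 - γ) * essSup (fun x => |Δ (k - 1) x + r k x|) α)
    -- clipped residual update
    (hres : ∀ k ∈ Finset.Icc 1 K,
      Δ k = Clip ((1 - γ) * G / γ) (fun x => Δ (k - 1) x + r k x - h k x)) :
    ∀ k ∈ Finset.Icc 1 K,
      essSup (fun x => |Δ k x|) α ≤ (1 - γ) * G / γ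
      ∧ (∀ᵐ x ∂α, Δ k x = Δ (k - 1) x + r k x - h k x)
      ∧ essSup (fun x => |h k x|) α ≤ (2 - γ) * G / γ
      ∧ (∀ᵐ x ∂α, Clip ((2 - γ) * G / γ) (h k) x = h k x) := by
  intro k hk
  rw [Finset.mem_Icc] at hk
  obtain ⟨hk1, hkK⟩ := hk
  set R : ℝ := (1 - γ) * G / γ with hRdef
  have hR : 0 ≤ R := div_nonneg (mul_nonneg (by linarith) hG) hγ0.le
  -- pointwise bound on Δ (k-1)
  have hΔb : ∀ x, |Δ (k - 1) x| ≤ R := by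
    rcases Nat.lt_or_ge 1 k with h2 | h2
    · have hmem : k - 1 ∈ Finset.Icc 1 K := by
        rw [Finset.mem_Icc]
        omega
      intro x
      rw [hres (k - 1) hmem]
      exact abs_clip_le hR _ x
    · have : k = 1 := le_antisymm h2 hk1
      subst this
      intro x
      simp [hΔ0]
      exact hR
  -- a.e. bound on r k
  have hrb : Filter.IsBoundedUnder (· ≤ ·) (ae α) (fun x => |r k x|) := by
    obtain ⟨_, M, hM⟩ := hrm k (Finset.mem_Icc.mpr ⟨hk1, hkK⟩)
    exact Filter.isBoundedUnder_of ⟨M, hM⟩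
  have hrae : ∀ᵐ x ∂α, |r k x| ≤ G := by
    filter_upwards [ae_le_essSup hrb] with x hx
    exact hx.trans (hrG k (Finset.mem_Icc.mpr ⟨hk1, hkK⟩))
  -- a.e. bound on Δ (k-1) + r k
  have hΔr : ∀ᵐ x ∂α, |Δ (k - 1) x + r k x| ≤ G / γ := by
    filter_upwards [hrae] with x hx
    have h1 := hΔb x
    have habs := abs_add_le (Δ (k - 1) x) (r k x)
    have hRG : R + G = G / γ := by
      rw [hRdef]
      field_simp
      ring
    linarith
  have hessΔr : essSup (fun x => |Δ (k - 1) x + r k x|) α ≤ G / γ :=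
    essSup_le_of_ae_le_real α hΔr
  -- essSup of the oracle error
  have horc : essSup (fun x => |h k x - (Δ (k - 1) x + r k x)|) α ≤ R := by
    refine le_trans (horacle k (Finset.mem_Icc.mpr ⟨hk1, hkK⟩)) ?_
    have : (1 - γ) * (G / γ) = R := by rw [hRdef]; ring
    calc (1 - γ) * essSup (fun x => |Δ (k - 1) x + r k x|) α
        ≤ (1 - γ) * (G / γ) := mul_le_mul_of_nonneg_left hessΔr (by linarith)
      _ = R := this
  -- a.e. bound on oracle error
  have hdiffb : Filter.IsBoundedUnder (· ≤ ·) (ae α)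
      (fun x => |h k x - (Δ (k - 1) x + r k x)|) := by
    obtain ⟨_, Mh, hMh⟩ := hhm k (Finset.mem_Icc.mpr ⟨hk1, hkK⟩)
    obtain ⟨_, Mr, hMr⟩ := hrm k (Finset.mem_Icc.mpr ⟨hk1, hkK⟩)
    refine Filter.isBoundedUnder_of ⟨Mh + (R + Mr), fun x => ?_⟩
    have h1 := hMh x
    have h2 := hMr x
    have h3 := hΔb x
    have h4 : |h k x - (Δ (k - 1) x + r k x)| ≤ |h k x| + |Δ (k - 1) x + r k x| := by
      calc |h k x - (Δ (k - 1) x + r k x)|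
          = |h k x + -(Δ (k - 1) x + r k x)| := by ring_nf
        _ ≤ |h k x| + |-(Δ (k - 1) x + r k x)| := abs_add_le _ _
        _ = |h k x| + |Δ (k - 1) x + r k x| := by rw [abs_neg]
    have h5 := abs_add_le (Δ (k - 1) x) (r k x)
    linarith
  have hdiffae : ∀ᵐ x ∂α, |h k x - (Δ (k - 1) x + r k x)| ≤ R := by
    filter_upwards [ae_le_essSup hdiffb] with x hx
    exact hx.trans horc
  -- point (i) second part : the clip is inactive a.e.
  have hae1 : ∀ᵐ x ∂α, Δ k x = Δ (k - 1) x + r k x - h k x := by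
    filter_upwards [hdiffae] with x hx
    rw [hres k (Finset.mem_Icc.mpr ⟨hk1, hkK⟩)]
    apply clip_eq_self
    rw [show Δ (k - 1) x + r k x - h k x = -(h k x - (Δ (k - 1) x + r k x)) by ring,
      abs_neg]
    exact hx
  -- point (i) first part
  have hbd1 : essSup (fun x => |Δ k x|) α ≤ R := by
    apply essSup_le_of_ae_le_real
    apply Filter.Eventually.of_forall
    intro x
    rw [hres k (Finset.mem_Icc.mpr ⟨hk1, hkK⟩)]
    exact abs_clip_le hR _ x
  -- point (ii)
  have hhae : ∀ᵐ x ∂α, |h k x| ≤ (2 - γ) * G / γ := by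
    filter_upwards [hdiffae, hΔr] with x hx1 hx2
    have : |h k x| ≤ |h k x - (Δ (k - 1) x + r k x)| + |Δ (k - 1) x + r k x| := by
      calc |h k x| = |(h k x - (Δ (k - 1) x + r k x)) + (Δ (k - 1) x + r k x)| := by
            ring_nf
        _ ≤ _ := abs_add_le _ _
    have heq : R + G / γ = (2 - γ) * G / γ := by
      rw [hRdef]; field_simp; ring
    linarith
  refine ⟨hbd1, hae1, essSup_le_of_ae_le_real α hhae, ?_⟩
  filter_upwards [hhae] with x hx
  exact clip_eq_self hx
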